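/- arXiv:2205.07488 — 7 statements merged into one kernel-verified Lean document; each statement's English description precedes it below -/
import Mathlib

section
/- Fix d ≥ 1, ε ∈ (0, 1/3], and set p := (1−ε)/ε. For θ ∈ ℝ^d define the density q_θ(x) := (1−ε)·φ_{θ,I}(x) + ε·φ_{−pθ,I}(x) on ℝ^d. Then for all θ, θ' ∈ ℝ^d: | ∫_{ℝ^d} q_θ(x) q_{θ'}(x) / φ_{0,I}(x) dx − 1 | ≤ exp(⟨θ,θ'⟩² / ε⁴) − 1. -/
open MeasureTheory Real

/-- The Gaussian density `φ_{μ,I}` on `ℝ^d` with identity covariance: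
`φ_{μ,I}(x) = (2π)^{−d/2} exp(−(1/2)‖x−μ‖₂²)`. -/
noncomputable def gaussI {d : ℕ} (μ : Fin d → ℝ) (x : Fin d → ℝ) : ℝ :=
  (2 * π) ^ (-(d : ℝ) / 2) * Real.exp (-(1 / 2) * ∑ i, (x i - μ i) ^ 2)

noncomputable def g1 (m t : ℝ) : ℝ := (2 * π) ^ (-(1:ℝ) / 2) * Real.exp (-(1 / 2) * (t - m) ^ 2)

lemma g1_integrable (m : ℝ) : Integrable (g1 m) := by
  have h : Integrable (fun t : ℝ => Real.exp (-(1/2) * t ^ 2)) :=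
    integrable_exp_neg_mul_sq (by norm_num)
  exact (h.comp_sub_right m).const_mul _

lemma g1_integral (m : ℝ) : ∫ t, g1 m t = 1 := by
  unfold g1
  rw [MeasureTheory.integral_const_mul,
    integral_sub_right_eq_self (fun t => Real.exp (-(1/2) * t ^ 2)) m,
    integral_gaussian]
  rw [show π / (1/2) = 2 * π by ring, Real.sqrt_eq_rpow, ← Real.rpow_add (by positivity)]
  norm_num

lemma gauss_eq_prod {d : ℕ} (μ x : Fin d → ℝ) : gaussI μ x = ∏ i, g1 (μ i) (x i) := by
  unfold gaussI g1
  rw [Finset.prod_mul_distrib, Finset.prod_const, ← Real.exp_sum, Finset.card_univ,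
    Fintype.card_fin, ← Real.rpow_natCast ((2*π) ^ (-(1:ℝ)/2)) d, ← Real.rpow_mul (by positivity),
    Finset.mul_sum]
  ring_nf

lemma gauss_integrable {d : ℕ} (μ : Fin d → ℝ) : Integrable (gaussI μ) := by
  have : gaussI μ = fun x => ∏ i, g1 (μ i) (x i) := funext (gauss_eq_prod μ)
  rw [this]
  exact Integrable.fintype_prod (fun i => g1_integrable (μ i))

lemma gauss_integral {d : ℕ} (μ : Fin d → ℝ) : ∫ x, gaussI μ x = 1 := by
  simp_rw [gauss_eq_prod μ]
  rw [integral_fintype_prod_volume_eq_prod (f := fun i => g1 (μ i))]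
  simp [g1_integral]

lemma gauss_key {d : ℕ} (a b x : Fin d → ℝ) :
    gaussI a x * gaussI b x / gaussI 0 x
      = Real.exp (∑ i, a i * b i) * gaussI (a + b) x := by
  unfold gaussI
  simp only [Pi.add_apply, Pi.zero_apply]
  have hC : (0:ℝ) < (2 * π) ^ (-(d:ℝ) / 2) := Real.rpow_pos_of_pos (by positivity) _
  rw [div_eq_iff (by positivity)]
  have hE : (-(1/2) * ∑ i, (x i - a i) ^ 2) + (-(1/2) * ∑ i, (x i - b i) ^ 2)
      = (∑ i, a i * b i) + (-(1/2) * ∑ i, (x i - (a i + b i)) ^ 2)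
        + (-(1/2) * ∑ i, (x i - 0) ^ 2) := by
    simp only [Finset.mul_sum, ← Finset.sum_add_distrib]
    exact Finset.sum_congr rfl fun i _ => by ring
  have h2 : Real.exp (-(1/2) * ∑ i, (x i - a i) ^ 2) * Real.exp (-(1/2) * ∑ i, (x i - b i) ^ 2)
      = Real.exp (∑ i, a i * b i) * Real.exp (-(1/2) * ∑ i, (x i - (a i + b i)) ^ 2)
        * Real.exp (-(1/2) * ∑ i, (x i - 0) ^ 2) := by
    rw [← Real.exp_add, ← Real.exp_add, ← Real.exp_add, hE]
  linear_combination ((2 * π) ^ (-(d:ℝ) / 2) * (2 * π) ^ (-(d:ℝ) / 2)) * h2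

lemma exp_le_add_exp_sq (x : ℝ) : Real.exp x ≤ x + Real.exp (x ^ 2) := by
  rcases le_or_gt (|x|) 1 with h | h
  · have hb := Real.exp_bound h (n := 2) (by norm_num)
    have h1 : Real.exp x - (1 + x) ≤ |x| ^ 2 * (3 / 4) := by
      have := (abs_sub_le_iff.1 hb).1
      simp [Finset.sum_range_succ] at this ⊢
      nlinarith [this]
    have h2 : 1 + x ^ 2 ≤ Real.exp (x ^ 2) := by
      have := Real.add_one_le_exp (x ^ 2); linarith
    rw [sq_abs] at h1
    nlinarith
  · rcases le_or_gt 0 x with hx | hx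
    · have hx1 : 1 ≤ x := le_of_lt (by rwa [abs_of_nonneg hx] at h)
      have : Real.exp x ≤ Real.exp (x ^ 2) := Real.exp_le_exp.2 (by nlinarith)
      linarith
    · have hx1 : 1 ≤ -x := by rw [abs_of_neg hx] at h; linarith
      have h1 : Real.exp x ≤ 1 := Real.exp_le_one_iff.2 hx.le
      have h2 : 1 + x ^ 2 ≤ Real.exp (x ^ 2) := by
        have := Real.add_one_le_exp (x ^ 2); linarith
      nlinarith

lemma main_ineq (ε : ℝ) (hε0 : 0 < ε) (hε3 : ε ≤ 1 / 3) (p : ℝ) (hp : p = (1 - ε) / ε)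
    (t : ℝ) :
    |(1 - ε) ^ 2 * Real.exp t + (1 - ε) * ε * Real.exp (-p * t)
      + ε * (1 - ε) * Real.exp (-p * t) + ε ^ 2 * Real.exp (p ^ 2 * t) - 1|
      ≤ Real.exp (t ^ 2 / ε ^ 4) - 1 := by
  have hεne : ε ≠ 0 := ne_of_gt hε0
  have hpε : p * ε = 1 - ε := by rw [hp]; field_simp
  have hw : (0:ℝ) ≤ 1 - ε := by linarith
  have hmoment : (1 - ε) ^ 2 * t + (1 - ε) * ε * (-p * t) + ε * (1 - ε) * (-p * t)
      + ε ^ 2 * (p ^ 2 * t) = 0 := by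
    linear_combination (t * (p * ε - (1 - ε))) * hpε
  have hEpos : (0:ℝ) ≤ t ^ 2 / ε ^ 4 := by positivity
  have hE1 : 1 ≤ Real.exp (t ^ 2 / ε ^ 4) := by
    rw [show (1:ℝ) = Real.exp 0 from (Real.exp_zero).symm]
    exact Real.exp_le_exp.2 hEpos
  -- upper bounds on each exponential
  have hε4 : ε ^ 4 ≤ 1 := pow_le_one₀ hε0.le (by linarith)
  have key : ∀ a : ℝ, a ^ 2 * ε ^ 4 ≤ 1 → Real.exp (a * t) ≤ a * t + Real.exp (t ^ 2 / ε ^ 4) := by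
    intro a ha
    refine (exp_le_add_exp_sq (a * t)).trans (add_le_add le_rfl (Real.exp_le_exp.2 ?_))
    have h4 : (0:ℝ) < ε ^ 4 := by positivity
    rw [le_div_iff₀ h4]
    nlinarith [mul_le_mul_of_nonneg_right ha (sq_nonneg t)]
  have hpra : p ^ 2 * ε ^ 4 = (1 - ε) ^ 2 * ε ^ 2 := by
    have : p ^ 2 * ε ^ 4 = (p * ε) ^ 2 * ε ^ 2 := by ring
    rw [this, hpε]
  have hprb : p ^ 4 * ε ^ 4 = (1 - ε) ^ 4 := by
    have : p ^ 4 * ε ^ 4 = ((p * ε) ^ 2) ^ 2 := by ring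
    rw [this, hpε]; ring
  have k1 : Real.exp t ≤ t + Real.exp (t ^ 2 / ε ^ 4) := by
    have := key 1 (by nlinarith); simpa using this
  have k2 : Real.exp (-p * t) ≤ -p * t + Real.exp (t ^ 2 / ε ^ 4) := by
    refine key (-p) ?_
    have : (-p) ^ 2 * ε ^ 4 = (1 - ε) ^ 2 * ε ^ 2 := by rw [← hpra]; ring
    rw [this]; nlinarith
  have k3 : Real.exp (p ^ 2 * t) ≤ p ^ 2 * t + Real.exp (t ^ 2 / ε ^ 4) := by
    refine key (p ^ 2) ?_
    have : (p ^ 2) ^ 2 * ε ^ 4 = (1 - ε) ^ 4 := by rw [← hprb]; ring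
    rw [this]; nlinarith [sq_nonneg ((1-ε)^2)]
  have l1 : t + 1 ≤ Real.exp t := Real.add_one_le_exp t
  have l2 : -p * t + 1 ≤ Real.exp (-p * t) := Real.add_one_le_exp _
  have l3 : p ^ 2 * t + 1 ≤ Real.exp (p ^ 2 * t) := Real.add_one_le_exp _
  have w1 : (0:ℝ) ≤ (1 - ε) ^ 2 := sq_nonneg _
  have w2 : (0:ℝ) ≤ (1 - ε) * ε := mul_nonneg hw hε0.le
  have w3 : (0:ℝ) ≤ ε * (1 - ε) := mul_nonneg hε0.le hw
  have w4 : (0:ℝ) ≤ ε ^ 2 := sq_nonneg _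
  rw [abs_le]
  constructor
  · nlinarith [mul_le_mul_of_nonneg_left l1 w1, mul_le_mul_of_nonneg_left l2 w2,
      mul_le_mul_of_nonneg_left l2 w3, mul_le_mul_of_nonneg_left l3 w4]
  · nlinarith [mul_le_mul_of_nonneg_left k1 w1, mul_le_mul_of_nonneg_left k2 w2,
      mul_le_mul_of_nonneg_left k2 w3, mul_le_mul_of_nonneg_left k3 w4]

/-- bound on the χ²-correlation of two Huber-contaminated Gaussians with
respect to the standard Gaussian. -/
theorem stmt2 {d : ℕ} (hd : 1 ≤ d) (ε : ℝ) (hε : ε ∈ Set.Ioc 0 (1 / 3 : ℝ))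
    (p : ℝ) (hp : p = (1 - ε) / ε)
    (q : (Fin d → ℝ) → (Fin d → ℝ) → ℝ)
    (hq : ∀ θ x, q θ x = (1 - ε) * gaussI θ x + ε * gaussI (-p • θ) x)
    (θ θ' : Fin d → ℝ) :
    |(∫ x : Fin d → ℝ, q θ x * q θ' x / gaussI 0 x) - 1|
      ≤ Real.exp ((∑ i, θ i * θ' i) ^ 2 / ε ^ 4) - 1 := by
  set t : ℝ := ∑ i, θ i * θ' i with ht
  have s2 : (∑ i, θ i * (-p • θ') i) = -p * t := by
    simp only [Pi.smul_apply, smul_eq_mul, ht, Finset.mul_sum]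
    exact Finset.sum_congr rfl fun i _ => by ring
  have s3 : (∑ i, (-p • θ) i * θ' i) = -p * t := by
    simp only [Pi.smul_apply, smul_eq_mul, ht, Finset.mul_sum]
    exact Finset.sum_congr rfl fun i _ => by ring
  have s4 : (∑ i, (-p • θ) i * (-p • θ') i) = p ^ 2 * t := by
    simp only [Pi.smul_apply, smul_eq_mul, ht, Finset.mul_sum]
    exact Finset.sum_congr rfl fun i _ => by ring
  have hpt : ∀ x, q θ x * q θ' x / gaussI 0 x
      = (1 - ε) ^ 2 * (Real.exp t * gaussI (θ + θ') x)
        + (1 - ε) * ε * (Real.exp (-p * t) * gaussI (θ + -p • θ') x)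
        + ε * (1 - ε) * (Real.exp (-p * t) * gaussI (-p • θ + θ') x)
        + ε ^ 2 * (Real.exp (p ^ 2 * t) * gaussI (-p • θ + -p • θ') x) := by
    intro x
    rw [hq, hq]
    have expand : ∀ A B C D g : ℝ,
        ((1 - ε) * A + ε * B) * ((1 - ε) * C + ε * D) / g
          = (1 - ε) ^ 2 * (A * C / g) + (1 - ε) * ε * (A * D / g)
            + ε * (1 - ε) * (B * C / g) + ε ^ 2 * (B * D / g) := by
      intros A B C D g; simp only [div_eq_mul_inv]; ring
    rw [expand, gauss_key, gauss_key, gauss_key, gauss_key, s2, s3, s4, ← ht]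
  have hint : (∫ x : Fin d → ℝ, q θ x * q θ' x / gaussI 0 x)
      = (1 - ε) ^ 2 * Real.exp t + (1 - ε) * ε * Real.exp (-p * t)
        + ε * (1 - ε) * Real.exp (-p * t) + ε ^ 2 * Real.exp (p ^ 2 * t) := by
    simp only [hpt]
    have I1 : Integrable (fun x : Fin d → ℝ =>
        (1 - ε) ^ 2 * (Real.exp t * gaussI (θ + θ') x)) :=
      ((gauss_integrable _).const_mul _).const_mul _
    have I2 : Integrable (fun x : Fin d → ℝ =>
        (1 - ε) * ε * (Real.exp (-p * t) * gaussI (θ + -p • θ') x)) :=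
      ((gauss_integrable _).const_mul _).const_mul _
    have I3 : Integrable (fun x : Fin d → ℝ =>
        ε * (1 - ε) * (Real.exp (-p * t) * gaussI (-p • θ + θ') x)) :=
      ((gauss_integrable _).const_mul _).const_mul _
    have I4 : Integrable (fun x : Fin d → ℝ =>
        ε ^ 2 * (Real.exp (p ^ 2 * t) * gaussI (-p • θ + -p • θ') x)) :=
      ((gauss_integrable _).const_mul _).const_mul _
    have h4 := integral_add ((I1.add I2).add I3) I4
    have h3 := integral_add (I1.add I2) I3
    have h2 := integral_add I1 I2
    simp only [Pi.add_apply] at h4 h3 h2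
    rw [h4, h3, h2]
    simp only [integral_const_mul, gauss_integral, mul_one]
  rw [hint]
  exact main_ineq ε hε.1 hε.2 p hp t
end

section
/- Let ε ∈ (0, 1/3], set p := (1−ε)/ε (so p ≥ 2), and let t ≥ 0 be a real number. Then (4/p²)·( exp(p² t) − p² t − 1 ) ≤ exp(t²/ε⁴) − 1. -/
open Real

private lemma aux_deriv_mono (f f' : ℝ → ℝ) (hd : ∀ x, HasDerivAt f (f' x) x)
    (h0 : ∀ x, 0 ≤ x → 0 ≤ f' x) (hf0 : f 0 = 0) : ∀ x, 0 ≤ x → 0 ≤ f x := by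
  intro x hx
  have hmono : MonotoneOn f (Set.Ici (0:ℝ)) := by
    apply monotoneOn_of_deriv_nonneg (convex_Ici 0)
    · exact fun y _ => (hd y).continuousAt.continuousWithinAt
    · exact fun y _ => ((hd y).differentiableAt).differentiableWithinAt
    · intro y hy
      rw [interior_Ici] at hy
      rw [(hd y).deriv]
      exact h0 y hy.le
  have := hmono (Set.self_mem_Ici) hx hx
  rwa [hf0] at this

private lemma aux1 (x : ℝ) (hx : 0 ≤ x) :
    Real.exp x - x - 1 ≤ x ^ 2 / 2 * Real.exp x := by
  have key : ∀ y, 0 ≤ y → 0 ≤ y ^ 2 / 2 * Real.exp y - (Real.exp y - y - 1) := by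
    apply aux_deriv_mono _ (fun y => y * Real.exp y + y ^ 2 / 2 * Real.exp y - (Real.exp y - 1))
    · intro y
      have h1 : HasDerivAt (fun y : ℝ => y ^ 2 / 2 * Real.exp y)
          (y * Real.exp y + y ^ 2 / 2 * Real.exp y) y := by
        have := ((hasDerivAt_pow 2 y).div_const 2).mul (Real.hasDerivAt_exp y)
        exact this.congr_deriv (by ring)
      have h2 : HasDerivAt (fun y : ℝ => Real.exp y - y - 1) (Real.exp y - 1) y := by
        have := ((Real.hasDerivAt_exp y).sub (hasDerivAt_id y)).sub_const 1
        simpa using this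
      exact h1.sub h2
    · intro y hy
      have h3 : (1 : ℝ) - y ≤ Real.exp (-y) := by
        have := Real.add_one_le_exp (-y); linarith
      have h4 : Real.exp (-y) * Real.exp y = 1 := by
        rw [← Real.exp_add]; simp
      have h5 : 0 < Real.exp y := Real.exp_pos y
      nlinarith [sq_nonneg y, mul_le_mul_of_nonneg_right h3 h5.le]
    · simp
  linarith [key x hx]

private lemma aux2 (y : ℝ) (hy : 0 ≤ y) :
    y * Real.exp (y / 2) ≤ Real.exp y - 1 := by
  have key : ∀ u, 0 ≤ u → 0 ≤ Real.exp u - Real.exp (-u) - 2 * u := by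
    apply aux_deriv_mono _ (fun u => Real.exp u + Real.exp (-u) - 2)
    · intro u
      have h1 : HasDerivAt (fun u : ℝ => Real.exp (-u)) (-Real.exp (-u)) u := by
        have := (Real.hasDerivAt_exp (-u)).comp u (hasDerivAt_neg u)
        exact this.congr_deriv (by ring)
      have := ((Real.hasDerivAt_exp u).sub h1).sub ((hasDerivAt_id u).const_mul 2)
      exact this.congr_deriv (by ring)
    · intro u _
      have h4 : Real.exp (-u) * Real.exp u = 1 := by rw [← Real.exp_add]; simp
      nlinarith [Real.exp_pos u, Real.exp_pos (-u), sq_nonneg (Real.exp u - Real.exp (-u))]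
    · simp
  have h := key (y / 2) (by linarith)
  have h4 : Real.exp (y / 2) * Real.exp (y / 2) = Real.exp y := by
    rw [← Real.exp_add]; ring_nf
  have h5 : Real.exp (y / 2) * Real.exp (-(y / 2)) = 1 := by rw [← Real.exp_add]; simp
  have h6 : 0 < Real.exp (y / 2) := Real.exp_pos _
  nlinarith [mul_le_mul_of_nonneg_left h h6.le]

/-- for `ε ∈ (0, 1/3]`, `p = (1−ε)/ε` and `t ≥ 0`,
`(4/p²)(exp(p²t) − p²t − 1) ≤ exp(t²/ε⁴) − 1`. -/
theorem stmt4 (ε : ℝ) (hε : ε ∈ Set.Ioc 0 (1 / 3 : ℝ)) (p : ℝ) (hp : p = (1 - ε) / ε)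
    (t : ℝ) (ht : 0 ≤ t) :
    (4 / p ^ 2) * (Real.exp (p ^ 2 * t) - p ^ 2 * t - 1) ≤ Real.exp (t ^ 2 / ε ^ 4) - 1 := by
  obtain ⟨hε0, hε3⟩ := hε
  have hεinv : 1 / ε = p + 1 := by
    rw [hp]; field_simp; ring
  have hp2 : (2 : ℝ) ≤ p := by
    rw [hp, le_div_iff₀ hε0]; linarith
  have hpp : (0:ℝ) < p ^ 2 := by positivity
  -- rewrite RHS exponent
  have hexp : t ^ 2 / ε ^ 4 = (p + 1) ^ 4 * t ^ 2 := by
    have : (1 / ε) ^ 4 = (p + 1) ^ 4 := by rw [hεinv]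
    field_simp at this ⊢
    nlinarith [this]
  rw [hexp]
  set y := (p + 1) ^ 4 * t ^ 2 with hy
  have hy0 : 0 ≤ y := by positivity
  -- lower bound RHS
  have hRHS : y * Real.exp (y / 2) ≤ Real.exp y - 1 := aux2 y hy0
  -- upper bound LHS
  have hx0 : 0 ≤ p ^ 2 * t := by positivity
  have hLHS : Real.exp (p ^ 2 * t) - p ^ 2 * t - 1 ≤
      (p ^ 2 * t) ^ 2 / 2 * Real.exp (p ^ 2 * t) := aux1 _ hx0
  have hLHS' : (4 / p ^ 2) * (Real.exp (p ^ 2 * t) - p ^ 2 * t - 1) ≤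
      2 * p ^ 2 * t ^ 2 * Real.exp (p ^ 2 * t) := by
    have h := mul_le_mul_of_nonneg_left hLHS (by positivity : (0:ℝ) ≤ 4 / p ^ 2)
    calc (4 / p ^ 2) * (Real.exp (p ^ 2 * t) - p ^ 2 * t - 1)
        ≤ (4 / p ^ 2) * ((p ^ 2 * t) ^ 2 / 2 * Real.exp (p ^ 2 * t)) := h
      _ = 2 * p ^ 2 * t ^ 2 * Real.exp (p ^ 2 * t) := by field_simp; ring
  -- key middle inequality: 2 p² t² e^{p²t} ≤ y e^{y/2}
  have hmid : 2 * p ^ 2 * t ^ 2 * Real.exp (p ^ 2 * t) ≤ y * Real.exp (y / 2) := by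
    have hq : p ^ 2 * t ≤ 1 / 2 + y / 2 := by
      have hp4 : p ^ 4 * t ^ 2 ≤ y := by nlinarith [sq_nonneg t]
      nlinarith [sq_nonneg (p ^ 2 * t - 1)]
    have he : Real.exp (p ^ 2 * t) ≤ Real.exp (1 / 2) * Real.exp (y / 2) := by
      rw [← Real.exp_add]; exact Real.exp_le_exp.2 hq
    have hhalf : Real.exp (1 / 2 : ℝ) ≤ 2 := by
      nlinarith [Real.exp_one_lt_d9, Real.exp_pos (1/2 : ℝ),
        Real.exp_add (1/2 : ℝ) (1/2), sq_nonneg (Real.exp (1/2:ℝ) - 2)]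
    have hc : 4 * p ^ 2 ≤ (p + 1) ^ 4 := by nlinarith
    have hE : 0 < Real.exp (y / 2) := Real.exp_pos _
    calc 2 * p ^ 2 * t ^ 2 * Real.exp (p ^ 2 * t)
        ≤ 2 * p ^ 2 * t ^ 2 * (Real.exp (1 / 2) * Real.exp (y / 2)) := by
          apply mul_le_mul_of_nonneg_left he (by positivity)
      _ ≤ 2 * p ^ 2 * t ^ 2 * (2 * Real.exp (y / 2)) := by
          apply mul_le_mul_of_nonneg_left _ (by positivity)
          exact mul_le_mul_of_nonneg_right hhalf hE.le
      _ = 4 * p ^ 2 * t ^ 2 * Real.exp (y / 2) := by ring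
      _ ≤ (p + 1) ^ 4 * t ^ 2 * Real.exp (y / 2) := by
          apply mul_le_mul_of_nonneg_right _ hE.le
          nlinarith [sq_nonneg t]
      _ = y * Real.exp (y / 2) := by rw [hy]
  linarith
end

section
/- Let 0 < q ≤ 2, let d ≥ 1 and 0 ≤ m < d be integers, let μ ∈ ℝ^d, and let J ⊆ {1,…,d} with |J| = m be such that |μ_i| ≤ |μ_j| for every i ∉ J and j ∈ J. Then ∑_{i ∉ J} μ_i² ≤ ( ∑_{i=1}^d |μ_i|^q )^{2/q} · (m+1)^{1 − 2/q}. In particular, if ‖μ‖_q ≤ s then ∑_{i ∉ J} μ_i² ≤ s² (m+1)^{1 − 2/q}. -/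
/-- tail bound for vectors of bounded `ℓ_q` norm. If `J` consists of `m`
coordinates of `μ` of largest absolute value, then the squared Euclidean norm of the
remaining coordinates is at most `‖μ‖_q² (m+1)^{1−2/q}`; in particular it is at most
`s² (m+1)^{1−2/q}` when `‖μ‖_q ≤ s`. -/
theorem stmt10 (q : ℝ) (hq0 : 0 < q) (hq2 : q ≤ 2) (d m : ℕ) (hd : 1 ≤ d) (hmd : m < d)
    (μ : Fin d → ℝ) (J : Finset (Fin d)) (hJ : J.card = m)
    (hmax : ∀ i ∉ J, ∀ j ∈ J, |μ i| ≤ |μ j|) :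
    (∑ i ∈ Jᶜ, μ i ^ 2) ≤ (∑ i, |μ i| ^ q) ^ (2 / q) * ((m : ℝ) + 1) ^ (1 - 2 / q) ∧
      ∀ s : ℝ, (∑ i, |μ i| ^ q) ^ (1 / q) ≤ s →
        (∑ i ∈ Jᶜ, μ i ^ 2) ≤ s ^ 2 * ((m : ℝ) + 1) ^ (1 - 2 / q) := by
  set S := ∑ i, |μ i| ^ q with hSdef
  have hSnn : 0 ≤ S := Finset.sum_nonneg fun i _ => Real.rpow_nonneg (abs_nonneg _) _
  have hqne : q ≠ 0 := ne_of_gt hq0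
  have hexp : 0 ≤ 2 / q - 1 := by
    rw [sub_nonneg, le_div_iff₀ hq0]; linarith
  have hm1 : (0:ℝ) < (m:ℝ) + 1 := by positivity
  have hmexp : 0 ≤ ((m:ℝ) + 1) ^ (1 - 2 / q) := Real.rpow_nonneg hm1.le _
  -- key per-coordinate bound
  have hterm : ∀ i ∉ J, ((m:ℝ) + 1) * |μ i| ^ q ≤ S := by
    intro i hi
    have h1 : ∑ j ∈ J, |μ i| ^ q ≤ ∑ j ∈ J, |μ j| ^ q :=
      Finset.sum_le_sum fun j hj => Real.rpow_le_rpow (abs_nonneg _) (hmax i hi j hj) hq0.le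
    have h2 : ∑ j ∈ insert i J, |μ j| ^ q ≤ S :=
      Finset.sum_le_sum_of_subset_of_nonneg (Finset.subset_univ _)
        (fun j _ _ => Real.rpow_nonneg (abs_nonneg _) _)
    rw [Finset.sum_insert hi] at h2
    have h3 : ∑ j ∈ J, |μ i| ^ q = (m:ℝ) * |μ i| ^ q := by
      rw [Finset.sum_const, hJ, nsmul_eq_mul]
    nlinarith [h1, h2]
  -- main bound
  have main : (∑ i ∈ Jᶜ, μ i ^ 2) ≤ S ^ (2 / q) * ((m:ℝ) + 1) ^ (1 - 2 / q) := by
    rcases eq_or_lt_of_le hSnn with hS0 | hSpos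
    · -- S = 0 : all coordinates vanish
      have hall : ∀ i, μ i = 0 := by
        intro i
        have h1 : |μ i| ^ q ≤ S :=
          Finset.single_le_sum (f := fun j => |μ j| ^ q)
            (fun j _ => Real.rpow_nonneg (abs_nonneg _) _) (Finset.mem_univ i)
        have h2 : |μ i| ^ q = 0 :=
          le_antisymm (by rw [← hS0] at h1; exact h1) (Real.rpow_nonneg (abs_nonneg _) _)
        have := (Real.rpow_eq_zero (abs_nonneg _) hqne).mp h2
        exact abs_eq_zero.mp this
      have : (∑ i ∈ Jᶜ, μ i ^ 2) = 0 := Finset.sum_eq_zero fun i _ => by rw [hall i]; ring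
      rw [this]
      positivity
    · -- S > 0
      set C := (S / ((m:ℝ) + 1)) ^ (2 / q - 1) with hCdef
      have hCnn : 0 ≤ C := Real.rpow_nonneg (by positivity) _
      have step : ∀ i ∈ Jᶜ, μ i ^ 2 ≤ C * |μ i| ^ q := by
        intro i hi
        rw [Finset.mem_compl] at hi
        have ha : |μ i| ^ q ≤ S / ((m:ℝ) + 1) := by
          rw [le_div_iff₀ hm1]; linarith [hterm i hi]
        have hann : 0 ≤ |μ i| ^ q := Real.rpow_nonneg (abs_nonneg _) _
        rcases eq_or_ne (μ i) 0 with h0 | h0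
        · rw [h0]; simp [Real.zero_rpow hqne]
        · have habs : 0 < |μ i| := abs_pos.mpr h0
          have haq : 0 < |μ i| ^ q := Real.rpow_pos_of_pos habs q
          have key : μ i ^ 2 = (|μ i| ^ q) ^ (2 / q - 1) * |μ i| ^ q := by
            symm
            calc (|μ i| ^ q) ^ (2 / q - 1) * |μ i| ^ q
                = |μ i| ^ (q * (2 / q - 1)) * |μ i| ^ q := by
                  rw [← Real.rpow_mul (abs_nonneg _)]
              _ = |μ i| ^ (q * (2 / q - 1) + q) := (Real.rpow_add habs _ _).symm
              _ = |μ i| ^ (2:ℝ) := by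
                  rw [show q * (2 / q - 1) + q = 2 by field_simp; ring]
              _ = μ i ^ 2 := by
                  rw [show (2:ℝ) = ((2:ℕ):ℝ) by norm_num, Real.rpow_natCast, sq_abs]
          rw [key]
          exact mul_le_mul_of_nonneg_right
            (Real.rpow_le_rpow hann ha hexp) hann
      calc (∑ i ∈ Jᶜ, μ i ^ 2) ≤ ∑ i ∈ Jᶜ, C * |μ i| ^ q := Finset.sum_le_sum step
        _ = C * ∑ i ∈ Jᶜ, |μ i| ^ q := by rw [Finset.mul_sum]
        _ ≤ C * S := by
            apply mul_le_mul_of_nonneg_left _ hCnn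
            exact Finset.sum_le_sum_of_subset_of_nonneg (Finset.subset_univ _)
              (fun j _ _ => Real.rpow_nonneg (abs_nonneg _) _)
        _ = S ^ (2 / q) * ((m:ℝ) + 1) ^ (1 - 2 / q) := by
            rw [hCdef, Real.div_rpow hSnn hm1.le]
            rw [show (1 - 2 / q : ℝ) = -(2 / q - 1) by ring, Real.rpow_neg hm1.le]
            have h5 : S ^ (2 / q - 1) * S = S ^ (2 / q) := by
              have h6 := Real.rpow_add hSpos (2 / q - 1) 1
              rw [Real.rpow_one] at h6
              rw [← h6]; norm_num
            rw [div_mul_eq_mul_div, h5, div_eq_mul_inv]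
  refine ⟨main, fun s hs => ?_⟩
  have hsnn : 0 ≤ S ^ (1 / q) := Real.rpow_nonneg hSnn _
  have hsq : S ^ (2 / q) ≤ s ^ 2 := by
    have : S ^ (2 / q) = (S ^ (1 / q)) ^ 2 := by
      rw [← Real.rpow_natCast (S ^ (1 / q)) 2, ← Real.rpow_mul hSnn]
      congr 1; push_cast; ring
    rw [this]
    exact pow_le_pow_left₀ hsnn hs 2
  exact le_trans main (mul_le_mul_of_nonneg_right hsq hmexp)
end

section
/- Let 0 < q < 2, let ε > 0, s > 0, d ≥ 1, and let μ ∈ ℝ^d satisfy ‖μ‖_q ≤ s. Assume ε² ≤ s² (so the set below is nonempty) and let m := max{ u ∈ {1,…,d} : ε² u^{2/q − 1} ≤ s² }. Then there exists μ' ∈ ℝ^d such that: (i) μ' has at most m nonzero coordinates; (ii) every coordinate of μ' is an integer multiple of ε/√d; and (iii) ‖μ' − μ‖₂ ≤ √2 · ε. -/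
open scoped Classical

/-- covering/approximation step for robust `ℓ_q`-sparse mean estimation.
If `‖μ‖_q ≤ s` and `m` is the effective sparsity `max{u ∈ [d] : ε² u^{2/q−1} ≤ s²}`, then
there is an `m`-sparse vector `μ'` whose coordinates are integer multiples of `ε/√d`
with `‖μ' − μ‖₂ ≤ √2 ε`. -/
theorem stmt11 (q : ℝ) (hq0 : 0 < q) (hq2 : q < 2) (ε s : ℝ) (hε : 0 < ε) (hs : 0 < s)
    (d : ℕ) (hd : 1 ≤ d) (μ : Fin d → ℝ)
    (hμ : (∑ i, |μ i| ^ q) ^ (1 / q) ≤ s)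
    (hεs : ε ^ 2 ≤ s ^ 2)
    (m : ℕ) (hm1 : 1 ≤ m) (hmd : m ≤ d)
    (hm_mem : ε ^ 2 * (m : ℝ) ^ (2 / q - 1) ≤ s ^ 2)
    (hm_max : ∀ u : ℕ, 1 ≤ u → u ≤ d → ε ^ 2 * (u : ℝ) ^ (2 / q - 1) ≤ s ^ 2 → u ≤ m) :
    ∃ μ' : Fin d → ℝ,
      (Finset.univ.filter fun i => μ' i ≠ 0).card ≤ m ∧
      (∀ i, ∃ k : ℤ, μ' i = (k : ℝ) * (ε / Real.sqrt d)) ∧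
      Real.sqrt (∑ i, (μ' i - μ i) ^ 2) ≤ Real.sqrt 2 * ε := by
  have hq2' : (0:ℝ) ≤ 2 - q := by linarith
  have habs : ∀ i, (0:ℝ) ≤ |μ i| ^ q := fun i => Real.rpow_nonneg (abs_nonneg _) _
  -- total q-mass bound
  have hsum : ∑ i, |μ i| ^ q ≤ s ^ q := by
    have h1 : (0:ℝ) ≤ ∑ i, |μ i| ^ q := Finset.sum_nonneg fun i _ => habs i
    have h2 := Real.rpow_le_rpow (Real.rpow_nonneg h1 _) hμ hq0.le
    rwa [← Real.rpow_mul h1, one_div_mul_cancel (ne_of_gt hq0), Real.rpow_one] at h2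
  -- choose a maximizing set S of cardinality m
  obtain ⟨S, hSmem, hSmax⟩ := (Finset.univ.powersetCard m).exists_max_image
      (fun T => ∑ j ∈ T, |μ j| ^ q)
      (Finset.powersetCard_nonempty.mpr (by simpa using hmd))
  have hScard : S.card = m := (Finset.mem_powersetCard_univ.mp hSmem)
  -- swap argument
  have hkey : ∀ i ∉ S, ∀ j ∈ S, |μ i| ^ q ≤ |μ j| ^ q := by
    intro i hi j hj
    have hine : i ∉ S.erase j := fun h => hi (Finset.mem_of_mem_erase h)
    have hT : insert i (S.erase j) ∈ Finset.univ.powersetCard m := by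
      rw [Finset.mem_powersetCard_univ, Finset.card_insert_of_notMem hine,
        Finset.card_erase_of_mem hj, hScard]
      omega
    have h1 := hSmax _ hT
    rw [Finset.sum_insert hine] at h1
    rw [← Finset.add_sum_erase S (fun j => |μ j| ^ q) hj] at h1
    linarith
  -- pointwise tail bound
  have htail_pt : ∀ i ∉ S, ((m:ℝ) + 1) * |μ i| ^ q ≤ s ^ q := by
    intro i hi
    have h1 : ∑ j ∈ insert i S, |μ j| ^ q ≤ ∑ j, |μ j| ^ q :=
      Finset.sum_le_sum_of_subset_of_nonneg (Finset.subset_univ _)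
        (fun j _ _ => habs j)
    rw [Finset.sum_insert hi] at h1
    have h2 : (m:ℝ) * |μ i| ^ q ≤ ∑ j ∈ S, |μ j| ^ q := by
      calc (m:ℝ) * |μ i| ^ q = ∑ _j ∈ S, |μ i| ^ q := by
            rw [Finset.sum_const, hScard, nsmul_eq_mul]
        _ ≤ ∑ j ∈ S, |μ j| ^ q := Finset.sum_le_sum fun j hj => hkey i hi j hj
    nlinarith [hsum]
  -- the quantization step
  set δ : ℝ := ε / Real.sqrt d with hδdef
  have hsd : (0:ℝ) < Real.sqrt d := Real.sqrt_pos.mpr (by exact_mod_cast Nat.pos_of_ne_zero (by omega))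
  have hδ : 0 < δ := div_pos hε hsd
  refine ⟨fun i => if i ∈ S then (round (μ i / δ) : ℝ) * δ else 0, ?_, ?_, ?_⟩
  · refine le_trans (Finset.card_le_card ?_) hScard.le
    intro i hi
    simp only [Finset.mem_filter] at hi
    by_contra h
    exact hi.2 (by simp [h])
  · intro i
    by_cases h : i ∈ S
    · exact ⟨round (μ i / δ), by simp [h]⟩
    · exact ⟨0, by simp [h]⟩
  · -- error bound
    have hround : ∀ i ∈ S, ((round (μ i / δ) : ℝ) * δ - μ i) ^ 2 ≤ δ ^ 2 / 4 := by
      intro i _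
      have h1 : |μ i / δ - (round (μ i / δ) : ℝ)| ≤ 1 / 2 := abs_sub_round _
      have h2 : |(round (μ i / δ) : ℝ) * δ - μ i| ≤ δ / 2 := by
        have he : (round (μ i / δ) : ℝ) * δ - μ i = ((round (μ i / δ) : ℝ) - μ i / δ) * δ := by
          field_simp
        rw [he, abs_mul, abs_of_pos hδ, abs_sub_comm]
        nlinarith
      nlinarith [abs_nonneg ((round (μ i / δ) : ℝ) * δ - μ i), sq_abs ((round (μ i / δ) : ℝ) * δ - μ i)]
    have hδ2 : δ ^ 2 = ε ^ 2 / d := by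
      rw [hδdef, div_pow, Real.sq_sqrt (by positivity : (0:ℝ) ≤ (d:ℝ))]
    have hS_err : ∑ i ∈ S, ((if i ∈ S then (round (μ i / δ) : ℝ) * δ else 0) - μ i) ^ 2 ≤ ε ^ 2 / 4 := by
      calc ∑ i ∈ S, ((if i ∈ S then (round (μ i / δ) : ℝ) * δ else 0) - μ i) ^ 2
          = ∑ i ∈ S, ((round (μ i / δ) : ℝ) * δ - μ i) ^ 2 :=
            Finset.sum_congr rfl fun i hi => by rw [if_pos hi]
        _ ≤ ∑ _i ∈ S, δ ^ 2 / 4 := Finset.sum_le_sum hround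
        _ = (m : ℝ) * (δ ^ 2 / 4) := by rw [Finset.sum_const, hScard, nsmul_eq_mul]
        _ ≤ (d : ℝ) * (δ ^ 2 / 4) := by
            apply mul_le_mul_of_nonneg_right (by exact_mod_cast hmd) (by positivity)
        _ = ε ^ 2 / 4 := by
            have hdne : (d:ℝ) ≠ 0 := by positivity
            rw [hδ2]
            field_simp
    -- tail bound
    have hdpos : (0:ℝ) < d := by exact_mod_cast Nat.pos_of_ne_zero (by omega)
    have htail : ∑ i ∈ Sᶜ, ((if i ∈ S then (round (μ i / δ) : ℝ) * δ else 0) - μ i) ^ 2 ≤ ε ^ 2 := by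
      by_cases hcase : m = d
      · have : S = Finset.univ := Finset.eq_univ_of_card S (by rw [hScard, hcase]; simp)
        rw [this]
        simp [Finset.sum_empty]
        positivity
      · -- m < d
        have hmd' : m + 1 ≤ d := by omega
        have hmax := hm_max (m + 1) (by omega) hmd'
        have hlt : s ^ 2 < ε ^ 2 * ((m:ℝ) + 1) ^ (2 / q - 1) := by
          by_contra h
          push_neg at h
          have := hmax (by push_cast; exact h)
          omega
        set c : ℝ := (m:ℝ) + 1 with hc
        have hcpos : (0:ℝ) < c := by positivity
        -- pointwise bound on |μ i|^(2-q)
        have hApt : ∀ i ∉ S, |μ i| ^ (2 - q) ≤ (s ^ q / c) ^ ((2 - q) / q) := by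
          intro i hi
          have h1 : |μ i| ^ q ≤ s ^ q / c := by
            rw [le_div_iff₀ hcpos]
            calc |μ i| ^ q * c = c * |μ i| ^ q := by ring
              _ ≤ s ^ q := htail_pt i hi
          have h2 : |μ i| ≤ (s ^ q / c) ^ (1 / q) := by
            have h3 := Real.rpow_le_rpow (habs i) h1 (by positivity : (0:ℝ) ≤ 1 / q)
            rwa [← Real.rpow_mul (abs_nonneg _), mul_one_div, div_self (ne_of_gt hq0),
              Real.rpow_one] at h3
          calc |μ i| ^ (2 - q) ≤ ((s ^ q / c) ^ (1 / q)) ^ (2 - q) :=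
                Real.rpow_le_rpow (abs_nonneg _) h2 hq2'
            _ = (s ^ q / c) ^ ((2 - q) / q) := by
                rw [← Real.rpow_mul (by positivity)]
                congr 1
                field_simp
        -- sum it up
        have hq_split : ∀ i, μ i ^ 2 = |μ i| ^ (2 - q) * |μ i| ^ q := by
          intro i
          rw [← Real.rpow_add' (abs_nonneg _) (by norm_num : (2:ℝ) - q + q ≠ 0)]
          norm_num
        have hsum_tail : ∑ i ∈ Sᶜ, μ i ^ 2 ≤ (s ^ q / c) ^ ((2 - q) / q) * s ^ q := by
          calc ∑ i ∈ Sᶜ, μ i ^ 2 = ∑ i ∈ Sᶜ, |μ i| ^ (2 - q) * |μ i| ^ q :=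
                Finset.sum_congr rfl fun i _ => hq_split i
            _ ≤ ∑ i ∈ Sᶜ, (s ^ q / c) ^ ((2 - q) / q) * |μ i| ^ q := by
                refine Finset.sum_le_sum fun i hi => ?_
                exact mul_le_mul_of_nonneg_right (hApt i (Finset.mem_compl.mp hi)) (habs i)
            _ = (s ^ q / c) ^ ((2 - q) / q) * ∑ i ∈ Sᶜ, |μ i| ^ q := by
                rw [Finset.mul_sum]
            _ ≤ (s ^ q / c) ^ ((2 - q) / q) * s ^ q := by
                refine mul_le_mul_of_nonneg_left ?_ (Real.rpow_nonneg (by positivity) _)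
                exact le_trans (Finset.sum_le_sum_of_subset_of_nonneg (Finset.subset_univ _)
                  (fun j _ _ => habs j)) hsum
        -- algebra: (s^q/c)^((2-q)/q) * s^q = s^2 * c^((q-2)/q)
        have halg : (s ^ q / c) ^ ((2 - q) / q) * s ^ q = s ^ 2 * c ^ ((q - 2) / q) := by
          rw [Real.div_rpow (by positivity) hcpos.le, ← Real.rpow_mul hs.le]
          have hqe : q * ((2 - q) / q) = 2 - q := by field_simp
          rw [hqe]
          have h1 : s ^ ((2:ℝ) - q) * s ^ q = s ^ (2:ℝ) := by
            rw [← Real.rpow_add hs]; norm_num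
          have h2 : c ^ ((q - 2) / q) = (c ^ ((2 - q) / q))⁻¹ := by
            rw [← Real.rpow_neg hcpos.le]; congr 1; ring
          have h3 : s ^ (2:ℝ) = s ^ (2:ℕ) := by
            rw [← Real.rpow_natCast s 2]; norm_num
          rw [h2, div_mul_eq_mul_div, h1, h3, div_eq_mul_inv]
        have hexp : (2:ℝ) / q - 1 = (2 - q) / q := by
          rw [sub_div, div_self (ne_of_gt hq0)]
        have hlt' : s ^ 2 < ε ^ 2 * c ^ ((2 - q) / q) := by
          rw [← hexp]; exact hlt
        have hpow : c ^ ((2 - q) / q) * c ^ ((q - 2) / q) = 1 := by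
          rw [← Real.rpow_add hcpos, show (2 - q) / q + (q - 2) / q = 0 by ring,
            Real.rpow_zero]
        have hcp : 0 < c ^ ((q - 2) / q) := Real.rpow_pos_of_pos hcpos _
        have hrw : ∑ i ∈ Sᶜ, ((if i ∈ S then (round (μ i / δ) : ℝ) * δ else 0) - μ i) ^ 2
            = ∑ i ∈ Sᶜ, μ i ^ 2 :=
          Finset.sum_congr rfl fun i hi => by
            rw [if_neg (Finset.mem_compl.mp hi)]; ring
        rw [hrw]
        calc ∑ i ∈ Sᶜ, μ i ^ 2 ≤ (s ^ q / c) ^ ((2 - q) / q) * s ^ q := hsum_tail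
          _ = s ^ 2 * c ^ ((q - 2) / q) := halg
          _ ≤ ε ^ 2 := by
              have h4 : s ^ 2 * c ^ ((q - 2) / q) < ε ^ 2 * c ^ ((2 - q) / q) * c ^ ((q - 2) / q) :=
                mul_lt_mul_of_pos_right hlt' hcp
              have h5 : ε ^ 2 * c ^ ((2 - q) / q) * c ^ ((q - 2) / q) = ε ^ 2 := by
                rw [mul_assoc, hpow, mul_one]
              linarith
    have hsplit := Finset.sum_add_sum_compl S
      (fun i => ((if i ∈ S then (round (μ i / δ) : ℝ) * δ else 0) - μ i) ^ 2)
    have htot : ∑ i, ((if i ∈ S then (round (μ i / δ) : ℝ) * δ else 0) - μ i) ^ 2 ≤ 2 * ε ^ 2 := by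
      rw [← hsplit]; nlinarith
    calc Real.sqrt (∑ i, ((if i ∈ S then (round (μ i / δ) : ℝ) * δ else 0) - μ i) ^ 2)
        ≤ Real.sqrt (2 * ε ^ 2) := Real.sqrt_le_sqrt htot
      _ = Real.sqrt 2 * ε := by
          rw [Real.sqrt_mul (by norm_num) _, Real.sqrt_sq hε.le]
end

section
/- Let d, s, h be positive integers with 1 ≤ h ≤ s ≤ d. Then C(s,h) · C(d−s, s−h) / C(d,s) ≤ ( e s² / ( h (d−s+1) ) )^h, where C(a,b) denotes the binomial coefficient. (Equivalently, if H ~ Hypergeometric(d, s, s), then P[H = h] ≤ ( e s² / ( h (d−s+1) ) )^h.) -/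
/-- Key combinatorial inequality: `C(d−s, s−h) (d−s+1)^h ≤ C(d,s) s^h`. -/
lemma aux13 : ∀ (h s d : ℕ), h ≤ s → s ≤ d →
    (d - s).choose (s - h) * (d - s + 1) ^ h ≤ d.choose s * s ^ h := by
  intro h
  induction h with
  | zero => intro s d _ hsd; simpa using Nat.choose_le_choose s (Nat.sub_le d s)
  | succ h ih =>
    intro s d hhs hsd
    have hs1 : 1 ≤ s := le_trans (Nat.succ_le_succ (Nat.zero_le h)) hhs
    have hd1 : 1 ≤ d := le_trans hs1 hsd
    have key := ih (s - 1) (d - 1) (by omega) (by omega)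
    have e1 : d - 1 - (s - 1) = d - s := by omega
    have e2 : s - 1 - h = s - (h + 1) := by omega
    rw [e1, e2] at key
    have idd : d * (d - 1).choose (s - 1) = d.choose s * s := by
      have := Nat.add_one_mul_choose_eq (d - 1) (s - 1)
      have hd : d - 1 + 1 = d := by omega
      have hs : s - 1 + 1 = s := by omega
      rw [hd, hs] at this
      omega
    calc (d - s).choose (s - (h + 1)) * (d - s + 1) ^ (h + 1)
        = (d - s + 1) * ((d - s).choose (s - (h + 1)) * (d - s + 1) ^ h) := by ring
      _ ≤ (d - s + 1) * ((d - 1).choose (s - 1) * (s - 1) ^ h) :=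
          Nat.mul_le_mul_left _ key
      _ ≤ d * ((d - 1).choose (s - 1) * s ^ h) := by
          apply Nat.mul_le_mul (by omega)
          exact Nat.mul_le_mul_left _ (Nat.pow_le_pow_left (by omega) h)
      _ = d.choose s * s ^ (h + 1) := by rw [← mul_assoc, idd]; ring

/-- pointwise bound on the hypergeometric pmf:
`C(s,h) C(d−s, s−h) / C(d,s) ≤ (e s² / (h(d−s+1)))^h`. -/
theorem stmt13 (d s h : ℕ) (h1 : 1 ≤ h) (hhs : h ≤ s) (hsd : s ≤ d) :
    ((s.choose h : ℝ) * ((d - s).choose (s - h) : ℝ)) / (d.choose s : ℝ)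
      ≤ (Real.exp 1 * (s : ℝ) ^ 2 / ((h : ℝ) * ((d : ℝ) - (s : ℝ) + 1))) ^ h := by
  have hcast : (d : ℝ) - (s : ℝ) + 1 = ((d - s + 1 : ℕ) : ℝ) := by
    push_cast [Nat.cast_sub hsd]; ring
  have hCd : (0 : ℝ) < d.choose s := by
    exact_mod_cast Nat.choose_pos hsd
  have hh : (0 : ℝ) < h := by exact_mod_cast h1
  have hs : (0 : ℝ) < s := by exact_mod_cast lt_of_lt_of_le h1 hhs
  have hds : (0 : ℝ) < (d : ℝ) - (s : ℝ) + 1 := by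
    rw [hcast]; positivity
  -- Bound 1: C(d−s,s−h)/C(d,s) ≤ (s/(d−s+1))^h
  have b1 : (((d - s).choose (s - h) : ℝ)) / (d.choose s : ℝ)
      ≤ ((s : ℝ) / ((d : ℝ) - (s : ℝ) + 1)) ^ h := by
    rw [div_le_iff₀ hCd, div_pow, div_mul_eq_mul_div, le_div_iff₀ (by positivity)]
    have := aux13 h s d hhs hsd
    calc ((d - s).choose (s - h) : ℝ) * ((d : ℝ) - (s : ℝ) + 1) ^ h
        = (((d - s).choose (s - h) * (d - s + 1) ^ h : ℕ) : ℝ) := by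
          rw [hcast]; push_cast; ring
      _ ≤ ((d.choose s * s ^ h : ℕ) : ℝ) := by exact_mod_cast this
      _ = (s : ℝ) ^ h * (d.choose s : ℝ) := by push_cast; ring
  -- Bound 2: C(s,h) ≤ (e s / h)^h
  have b2 : (s.choose h : ℝ) ≤ (Real.exp 1 * (s : ℝ) / (h : ℝ)) ^ h := by
    have hb : (s.choose h : ℝ) ≤ (s : ℝ) ^ h / (Nat.factorial h : ℝ) := Nat.choose_le_pow_div h s
    have hfac : (h : ℝ) ^ h / (Nat.factorial h : ℝ) ≤ Real.exp h :=
      Real.pow_div_factorial_le_exp (x := (h:ℝ)) (by positivity) h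
    have hfacpos : (0 : ℝ) < (Nat.factorial h : ℝ) := by exact_mod_cast Nat.factorial_pos h
    have hinv : 1 / (Nat.factorial h : ℝ) ≤ Real.exp h / (h : ℝ) ^ h := by
      rw [div_le_div_iff₀ hfacpos (by positivity), one_mul]
      calc (h : ℝ) ^ h = (h : ℝ) ^ h / (Nat.factorial h : ℝ) * (Nat.factorial h : ℝ) := by field_simp
        _ ≤ Real.exp h * (Nat.factorial h : ℝ) := by gcongr
    have hexp : Real.exp (h : ℝ) = (Real.exp 1) ^ h := by
      rw [← Real.exp_nat_mul]; ring_nf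
    calc (s.choose h : ℝ) ≤ (s : ℝ) ^ h / (Nat.factorial h : ℝ) := hb
      _ = (s : ℝ) ^ h * (1 / (Nat.factorial h : ℝ)) := by ring
      _ ≤ (s : ℝ) ^ h * (Real.exp h / (h : ℝ) ^ h) := by
          apply mul_le_mul_of_nonneg_left hinv (by positivity)
      _ = (Real.exp 1 * (s : ℝ) / (h : ℝ)) ^ h := by
          rw [hexp, div_pow, mul_pow]; ring
  have hchoose_nonneg : (0 : ℝ) ≤ ((d - s).choose (s - h) : ℝ) / (d.choose s : ℝ) := by
    positivity
  calc ((s.choose h : ℝ) * ((d - s).choose (s - h) : ℝ)) / (d.choose s : ℝ)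
      = (s.choose h : ℝ) * (((d - s).choose (s - h) : ℝ) / (d.choose s : ℝ)) := by ring
    _ ≤ (Real.exp 1 * (s : ℝ) / (h : ℝ)) ^ h * ((s : ℝ) / ((d : ℝ) - (s : ℝ) + 1)) ^ h := by
        apply mul_le_mul b2 b1 hchoose_nonneg (by positivity)
    _ = (Real.exp 1 * (s : ℝ) ^ 2 / ((h : ℝ) * ((d : ℝ) - (s : ℝ) + 1))) ^ h := by
        rw [← mul_pow]; congr 1; field_simp
end

section
/- Let d, s be positive integers with s ≤ d, let λ ∈ ℝ and τ ∈ (0, 1] with sτ > 0, and set T := log( τ (d−s+1) / (e s) ) − λ. Assume T > 0. Then ∑_{h=⌈sτ⌉}^{s} exp(λ h) · C(s,h) C(d−s, s−h) / C(d,s) ≤ exp(−sτ · T) / (1 − exp(−T)). (Equivalently, if H ~ Hypergeometric(d, s, s), then E[ exp(λH) · 1{H > sτ−1} restricted to H ≥ ⌈sτ⌉ ] ≤ e^{−sτT}/(1−e^{−T}).) -/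
/-- Key combinatorial inequality: `C(d, s-h) * (d-s+1)^h ≤ C(d,s) * s^h`. -/
lemma aux_choose_bound (d s : ℕ) (hsd : s ≤ d) :
    ∀ h, h ≤ s → d.choose (s - h) * (d - s + 1) ^ h ≤ d.choose s * s ^ h := by
  intro h
  induction h with
  | zero => simp
  | succ h ih =>
    intro hhs
    have ih' := ih (le_of_lt (Nat.lt_of_succ_le hhs))
    -- key step: C(d, s-h-1) * (d-s+1) ≤ C(d, s-h) * s
    have key : d.choose (s - (h + 1)) * (d - s + 1) ≤ d.choose (s - h) * s := by
      have h1 : s - (h + 1) + 1 = s - h := by omega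
      have h2 := Nat.choose_succ_right_eq d (s - (h + 1))
      rw [h1] at h2
      -- h2 : d.choose (s - h) * (s - h) = d.choose (s - (h+1)) * (d - (s - (h+1)))
      calc d.choose (s - (h + 1)) * (d - s + 1)
          ≤ d.choose (s - (h + 1)) * (d - (s - (h + 1))) := by
            apply Nat.mul_le_mul_left; omega
        _ = d.choose (s - h) * (s - h) := h2.symm
        _ ≤ d.choose (s - h) * s := by apply Nat.mul_le_mul_left; omega
    calc d.choose (s - (h + 1)) * (d - s + 1) ^ (h + 1)
        = (d.choose (s - (h + 1)) * (d - s + 1)) * (d - s + 1) ^ h := by ring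
      _ ≤ (d.choose (s - h) * s) * (d - s + 1) ^ h := Nat.mul_le_mul_right _ key
      _ = s * (d.choose (s - h) * (d - s + 1) ^ h) := by ring
      _ ≤ s * (d.choose s * s ^ h) := Nat.mul_le_mul_left _ ih'
      _ = d.choose s * s ^ (h + 1) := by ring

/-- truncated MGF bound for the hypergeometric distribution:
`∑_{h=⌈sτ⌉}^s e^{λh} C(s,h)C(d−s,s−h)/C(d,s) ≤ e^{−sτT}/(1−e^{−T})` where
`T = log(τ(d−s+1)/(es)) − λ > 0`. -/
theorem stmt14 (d s : ℕ) (hs : 1 ≤ s) (hsd : s ≤ d) (lam τ : ℝ)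
    (hτ : τ ∈ Set.Ioc (0 : ℝ) 1)
    (T : ℝ)
    (hT : T = Real.log (τ * ((d : ℝ) - (s : ℝ) + 1) / (Real.exp 1 * (s : ℝ))) - lam)
    (hTpos : 0 < T) :
    ∑ h ∈ Finset.Icc ⌈(s : ℝ) * τ⌉₊ s,
        Real.exp (lam * (h : ℝ)) *
          (((s.choose h : ℝ) * ((d - s).choose (s - h) : ℝ)) / (d.choose s : ℝ))
      ≤ Real.exp (-((s : ℝ) * τ) * T) / (1 - Real.exp (-T)) := by
  obtain ⟨hτ0, hτ1⟩ := hτ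
  set m := ⌈(s : ℝ) * τ⌉₊ with hm
  have hspos : (0 : ℝ) < s := by exact_mod_cast hs
  have hsτpos : (0 : ℝ) < s * τ := mul_pos hspos hτ0
  have hmpos : 1 ≤ m := by
    rw [hm]; exact Nat.one_le_ceil_iff.mpr hsτpos
  have hmge : (s : ℝ) * τ ≤ m := Nat.le_ceil _
  have hds1 : (0 : ℝ) < (d : ℝ) - s + 1 := by
    have : (s : ℝ) ≤ d := by exact_mod_cast hsd
    linarith
  have hXpos : (0 : ℝ) < τ * ((d : ℝ) - (s : ℝ) + 1) / (Real.exp 1 * (s : ℝ)) := by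
    apply div_pos (mul_pos hτ0 hds1) (mul_pos (Real.exp_pos 1) hspos)
  set q := Real.exp (-T) with hq
  have hq0 : 0 < q := Real.exp_pos _
  have hq1 : q < 1 := by
    rw [hq, Real.exp_lt_one_iff]; linarith
  have hqval : q = Real.exp lam * (Real.exp 1 * s / (τ * ((d : ℝ) - s + 1))) := by
    rw [hq, hT, neg_sub, Real.exp_sub, Real.exp_log hXpos]
    field_simp
  have hchoosepos : (0 : ℝ) < d.choose s := by
    exact_mod_cast Nat.choose_pos hsd
  -- step 1: each term bounded by q^h
  have hterm : ∀ h ∈ Finset.Icc m s,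
      Real.exp (lam * (h : ℝ)) *
        (((s.choose h : ℝ) * ((d - s).choose (s - h) : ℝ)) / (d.choose s : ℝ)) ≤ q ^ h := by
    intro h hh
    rw [Finset.mem_Icc] at hh
    obtain ⟨hhm, hhs⟩ := hh
    have hhpos : 1 ≤ h := le_trans hmpos hhm
    have hhposR : (0 : ℝ) < h := by exact_mod_cast hhpos
    have hhτ : (s : ℝ) * τ ≤ h := le_trans hmge (by exact_mod_cast hhm)
    -- C(s,h) ≤ (e*s/h)^h ≤ (e/τ)^h
    have hc1 : (s.choose h : ℝ) ≤ (Real.exp 1 / τ) ^ h := by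
      have b1 : (s.choose h : ℝ) ≤ (s : ℝ) ^ h / h.factorial :=
        Nat.choose_le_pow_div h s
      have b2 : (h : ℝ) ^ h / h.factorial ≤ Real.exp h :=
        Real.pow_div_factorial_le_exp (h : ℝ) (le_of_lt hhposR) h
      have hfacpos : (0 : ℝ) < h.factorial := by exact_mod_cast h.factorial_pos
      have b3 : (1 : ℝ) / h.factorial ≤ Real.exp h / (h : ℝ) ^ h := by
        rw [div_le_div_iff₀ hfacpos (pow_pos hhposR h), one_mul]
        calc (h : ℝ) ^ h = (h : ℝ) ^ h / h.factorial * h.factorial := by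
              field_simp
          _ ≤ Real.exp h * h.factorial := by
              exact mul_le_mul_of_nonneg_right b2 (le_of_lt hfacpos)
      calc (s.choose h : ℝ) ≤ (s : ℝ) ^ h / h.factorial := b1
        _ = (s : ℝ) ^ h * (1 / h.factorial) := by ring
        _ ≤ (s : ℝ) ^ h * (Real.exp h / (h : ℝ) ^ h) := by
            exact mul_le_mul_of_nonneg_left b3 (by positivity)
        _ = (Real.exp 1 * s / h) ^ h := by
            rw [← Real.exp_one_pow, div_pow, mul_pow]
            ring
        _ ≤ (Real.exp 1 / τ) ^ h := by
            apply pow_le_pow_left₀ (by positivity)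
            rw [div_le_div_iff₀ hhposR hτ0]
            calc Real.exp 1 * s * τ = Real.exp 1 * (s * τ) := by ring
              _ ≤ Real.exp 1 * h := by
                  exact mul_le_mul_of_nonneg_left hhτ (le_of_lt (Real.exp_pos 1))
              _ = (h : ℝ) * Real.exp 1 := by ring
              _ = Real.exp 1 * h := by ring
    -- C(d-s, s-h)/C(d,s) ≤ (s/(d-s+1))^h
    have hc2 : ((d - s).choose (s - h) : ℝ) / (d.choose s : ℝ) ≤
        ((s : ℝ) / ((d : ℝ) - s + 1)) ^ h := by
      have n1 : (d - s).choose (s - h) ≤ d.choose (s - h) :=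
        Nat.choose_le_choose _ (Nat.sub_le d s)
      have n2 := aux_choose_bound d s hsd h hhs
      have n3 : (d - s).choose (s - h) * (d - s + 1) ^ h ≤ d.choose s * s ^ h :=
        le_trans (Nat.mul_le_mul_right _ n1) n2
      have n3R : ((d - s).choose (s - h) : ℝ) * ((d : ℝ) - s + 1) ^ h ≤
          (d.choose s : ℝ) * (s : ℝ) ^ h := by
        have := (Nat.cast_le (α := ℝ)).mpr n3
        push_cast at this
        have hcast : ((d : ℝ) - s + 1) = ((d - s + 1 : ℕ) : ℝ) := by
          push_cast [Nat.cast_sub hsd]; ring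
        rw [hcast]
        exact_mod_cast n3
      rw [div_le_iff₀ hchoosepos, div_pow]
      rw [div_mul_eq_mul_div, le_div_iff₀ (pow_pos hds1 h)]
      calc ((d - s).choose (s - h) : ℝ) * ((d : ℝ) - s + 1) ^ h
          ≤ (d.choose s : ℝ) * (s : ℝ) ^ h := n3R
        _ = (s : ℝ) ^ h * (d.choose s : ℝ) := by ring
    -- combine
    have hcomb : ((s.choose h : ℝ) * ((d - s).choose (s - h) : ℝ)) / (d.choose s : ℝ) ≤
        (Real.exp 1 * s / (τ * ((d : ℝ) - s + 1))) ^ h := by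
      calc ((s.choose h : ℝ) * ((d - s).choose (s - h) : ℝ)) / (d.choose s : ℝ)
          = (s.choose h : ℝ) * (((d - s).choose (s - h) : ℝ) / (d.choose s : ℝ)) := by
            ring
        _ ≤ (Real.exp 1 / τ) ^ h * ((s : ℝ) / ((d : ℝ) - s + 1)) ^ h := by
            apply mul_le_mul hc1 hc2 (by positivity) (by positivity)
        _ = (Real.exp 1 * s / (τ * ((d : ℝ) - s + 1))) ^ h := by
            rw [← mul_pow]; congr 1; field_simp
    calc Real.exp (lam * (h : ℝ)) *
          (((s.choose h : ℝ) * ((d - s).choose (s - h) : ℝ)) / (d.choose s : ℝ))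
        ≤ Real.exp (lam * (h : ℝ)) *
            (Real.exp 1 * s / (τ * ((d : ℝ) - s + 1))) ^ h := by
          exact mul_le_mul_of_nonneg_left hcomb (le_of_lt (Real.exp_pos _))
      _ = q ^ h := by
          rw [hqval, mul_pow, mul_comm lam (h : ℝ), Real.exp_nat_mul]
  -- step 2: sum of q^h
  have hsum : ∑ h ∈ Finset.Icc m s, q ^ h ≤ q ^ m / (1 - q) := by
    have hIcc : Finset.Icc m s = Finset.Ico m (s + 1) := by
      rw [Finset.Ico_add_one_right_eq_Icc]
    rw [hIcc, Finset.sum_Ico_eq_sum_range]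
    have : ∑ i ∈ Finset.range (s + 1 - m), q ^ (m + i)
        = q ^ m * ∑ i ∈ Finset.range (s + 1 - m), q ^ i := by
      rw [Finset.mul_sum]
      apply Finset.sum_congr rfl
      intro i _
      rw [pow_add]
    rw [this]
    have hgeo : ∑ i ∈ Finset.range (s + 1 - m), q ^ i ≤ (1 - q)⁻¹ := by
      have hts := tsum_geometric_of_lt_one (le_of_lt hq0) hq1
      rw [← hts]
      exact Summable.sum_le_tsum _ (fun i _ => by positivity)
        (summable_geometric_of_lt_one (le_of_lt hq0) hq1)
    calc q ^ m * ∑ i ∈ Finset.range (s + 1 - m), q ^ i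
        ≤ q ^ m * (1 - q)⁻¹ := by
          exact mul_le_mul_of_nonneg_left hgeo (by positivity)
      _ = q ^ m / (1 - q) := by rw [div_eq_mul_inv]
  have hqm : q ^ m ≤ Real.exp (-((s : ℝ) * τ) * T) := by
    rw [hq, ← Real.exp_nat_mul, Real.exp_le_exp]
    have : (m : ℝ) * -T = -(m : ℝ) * T := by ring
    rw [this, neg_mul, neg_mul, neg_le_neg_iff]
    exact mul_le_mul_of_nonneg_right hmge (le_of_lt hTpos)
  calc ∑ h ∈ Finset.Icc m s,
        Real.exp (lam * (h : ℝ)) *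
          (((s.choose h : ℝ) * ((d - s).choose (s - h) : ℝ)) / (d.choose s : ℝ))
      ≤ ∑ h ∈ Finset.Icc m s, q ^ h := Finset.sum_le_sum hterm
    _ ≤ q ^ m / (1 - q) := hsum
    _ ≤ Real.exp (-((s : ℝ) * τ) * T) / (1 - q) := by
        have h1q : 0 < 1 - q := by linarith
        gcongr
    _ = Real.exp (-((s : ℝ) * τ) * T) / (1 - Real.exp (-T)) := by rw [hq]
end

section
/- Let (Θ being a nonempty finite set), k ≥ 1, n ≥ 1, and let p : ℝ^k → [0,∞) and q_θ : ℝ^k → [0,∞) for each θ ∈ Θ be measurable functions with p > 0 almost everywhere. Define Q(x₁,…,x_n) := (1/|Θ|) ∑_{θ∈Θ} ∏_{i=1}^n q_θ(x_i) on (ℝ^k)^n. Then (with both sides possibly equal to +∞): ∫_{(ℝ^k)^n} Q(x₁,…,x_n)² / ∏_{i=1}^n p(x_i) dx₁⋯dx_n = (1/|Θ|²) ∑_{θ,θ'∈Θ} ( ∫_{ℝ^k} q_θ(x) q_{θ'}(x) / p(x) dx )^n. -/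
open MeasureTheory ENNReal

private lemma tensor_lintegral {k : ℕ} (g : (Fin k → ℝ) → ℝ≥0∞) (hg : Measurable g) :
    ∀ n : ℕ, ∫⁻ x : Fin n → Fin k → ℝ, ∏ i, g (x i) = (∫⁻ y : Fin k → ℝ, g y) ^ n := by
  intro n
  induction n with
  | zero =>
    simp only [Finset.univ_eq_empty, Finset.prod_empty, pow_zero, lintegral_const, one_mul]
    rw [show (volume : Measure (Fin 0 → Fin k → ℝ)) = Measure.pi (fun _ => volume) from rfl]
    simp [Measure.pi_empty_univ]
  | succ n ih =>
    have hmp := measurePreserving_piFinSuccAbove (fun _ : Fin (n + 1) => (volume : Measure (Fin k → ℝ))) 0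
    have hmeasn : Measurable fun y : Fin n → Fin k → ℝ => ∏ i, g (y i) :=
      Finset.measurable_prod Finset.univ fun i _ => hg.comp (measurable_pi_apply i)
    have h1 : ∫⁻ x : Fin (n+1) → Fin k → ℝ, ∏ i, g (x i)
        = ∫⁻ z : (Fin k → ℝ) × (Fin n → Fin k → ℝ),
            ∏ i, g ((MeasurableEquiv.piFinSuccAbove (fun _ => Fin k → ℝ) 0).symm z i)
            ∂((volume : Measure (Fin k → ℝ)).prod (Measure.pi fun _ => volume)) := by
      rw [volume_pi, ← hmp.map_eq, lintegral_map]
      · simp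
      · exact (Finset.measurable_prod Finset.univ fun i _ =>
          hg.comp ((measurable_pi_apply i).comp
            (MeasurableEquiv.piFinSuccAbove (fun _ => Fin k → ℝ) 0).symm.measurable))
      · exact (MeasurableEquiv.piFinSuccAbove (fun _ => Fin k → ℝ) 0).measurable
    have h2 : ∀ z : (Fin k → ℝ) × (Fin n → Fin k → ℝ),
        (∏ i, g ((MeasurableEquiv.piFinSuccAbove (fun _ => Fin k → ℝ) 0).symm z i))
          = g z.1 * ∏ i, g (z.2 i) := by
      intro z
      simp [MeasurableEquiv.piFinSuccAbove_symm_apply, Fin.insertNth_zero,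
        Fin.prod_univ_succ]
    rw [h1]
    simp_rw [h2]
    rw [lintegral_prod_mul (f := g) (g := fun y : Fin n → Fin k → ℝ => ∏ i, g (y i))
      hg.aemeasurable hmeasn.aemeasurable, ← volume_pi, ih, pow_succ]
    ring

/-- the Ingster–Suslina tensorization identity, as an identity in `[0,∞]`:
for `Q = (1/|Θ|) ∑_θ ∏_i q_θ(x_i)`,
`∫ Q²/∏ p = (1/|Θ|²) ∑_{θ,θ'} (∫ q_θ q_{θ'}/p)^n`. -/
theorem stmt15 (Θ : Type*) [Fintype Θ] [Nonempty Θ] (k n : ℕ) (hk : 1 ≤ k) (hn : 1 ≤ n)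
    (p : (Fin k → ℝ) → ℝ≥0∞) (q : Θ → (Fin k → ℝ) → ℝ≥0∞)
    (hp : Measurable p) (hq : ∀ θ, Measurable (q θ))
    (hp_fin : ∀ x, p x ≠ ⊤) (hq_fin : ∀ θ x, q θ x ≠ ⊤)
    (hp_pos : ∀ᵐ x ∂(volume : Measure (Fin k → ℝ)), p x ≠ 0) :
    ∫⁻ x : Fin n → Fin k → ℝ,
        ((1 / (Fintype.card Θ : ℝ≥0∞)) * ∑ θ, ∏ i, q θ (x i)) ^ 2 / ∏ i, p (x i)
      = (1 / (Fintype.card Θ : ℝ≥0∞) ^ 2) *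
          ∑ θ, ∑ θ', (∫⁻ x : Fin k → ℝ, q θ x * q θ' x / p x) ^ n := by
  set c : ℝ≥0∞ := 1 / (Fintype.card Θ : ℝ≥0∞) with hc
  have key : ∀ x : Fin n → Fin k → ℝ,
      ((c * ∑ θ, ∏ i, q θ (x i)) ^ 2 / ∏ i, p (x i))
        = c ^ 2 * ∑ θ, ∑ θ', ∏ i, (q θ (x i) * q θ' (x i) / p (x i)) := by
    intro x
    have hsq : (c * ∑ θ, ∏ i, q θ (x i)) ^ 2
        = c ^ 2 * ∑ θ, ∑ θ', (∏ i, q θ (x i)) * ∏ i, q θ' (x i) := by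
      rw [mul_pow]
      congr 1
      rw [sq, Finset.sum_mul_sum]
    rw [hsq, mul_div_assoc]
    congr 1
    rw [div_eq_mul_inv, Finset.sum_mul]
    refine Finset.sum_congr rfl fun θ _ => ?_
    rw [Finset.sum_mul]
    refine Finset.sum_congr rfl fun θ' _ => ?_
    rw [← Finset.prod_mul_distrib,
      ENNReal.prod_inv_distrib (fun i _ j _ _ => Or.inr (hp_fin (x j))),
      ← Finset.prod_mul_distrib]
    exact Finset.prod_congr rfl fun i _ => (div_eq_mul_inv _ _).symm
  simp_rw [key]
  have hm : ∀ (θ θ' : Θ), Measurable fun y : Fin k → ℝ => q θ y * q θ' y / p y :=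
    fun θ θ' => ((hq θ).mul (hq θ')).div hp
  rw [lintegral_const_mul]
  · have hc2 : c ^ 2 = 1 / (Fintype.card Θ : ℝ≥0∞) ^ 2 := by
      rw [hc, one_div, one_div, ← ENNReal.inv_pow]
    rw [hc2]
    congr 1
    rw [lintegral_finset_sum]
    · refine Finset.sum_congr rfl fun θ _ => ?_
      rw [lintegral_finset_sum]
      · exact Finset.sum_congr rfl fun θ' _ => tensor_lintegral _ (hm θ θ') n
      · exact fun θ' _ => Finset.measurable_prod Finset.univ fun i _ =>
          (hm θ θ').comp (measurable_pi_apply i)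
    · exact fun θ _ => Finset.measurable_sum Finset.univ fun θ' _ =>
        Finset.measurable_prod Finset.univ fun i _ =>
          (hm θ θ').comp (measurable_pi_apply i)
  · exact Finset.measurable_sum Finset.univ fun θ _ =>
      Finset.measurable_sum Finset.univ fun θ' _ =>
        Finset.measurable_prod Finset.univ fun i _ =>
          (hm θ θ').comp (measurable_pi_apply i)
end
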